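/- For every integer k ≥ 1, the number a_{2k-1,k} = Σ_{i=0}^{k-1} (-1/2)^i · (2k-1)_{k-i} · (k-1+i)!/((k-1-i)!·i!) equals (2k-1)!/(2^{k-1}·(k-1)!), and in particular is nonzero. -/

import Mathlib

/-- For `k ≥ 1`,
`a_{2k-1,k} = ∑_{i=0}^{k-1} (-1/2)^i (2k-1)_{k-i} (k-1+i)!/((k-1-i)! i!)
 = (2k-1)!/(2^{k-1}(k-1)!) ≠ 0`. -/
theorem stmt_6 (k : ℕ) (hk : 1 ≤ k) :
    (∑ i ∈ Finset.range k,
        (-(1 : ℚ) / 2) ^ i * (Nat.descFactorial (2 * k - 1) (k - i) : ℚ) *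
          (Nat.factorial (k - 1 + i) : ℚ) /
            ((Nat.factorial (k - 1 - i) : ℚ) * (Nat.factorial i : ℚ))
      = (Nat.factorial (2 * k - 1) : ℚ) / (2 ^ (k - 1) * (Nat.factorial (k - 1) : ℚ)))
    ∧ ∑ i ∈ Finset.range k,
        (-(1 : ℚ) / 2) ^ i * (Nat.descFactorial (2 * k - 1) (k - i) : ℚ) *
          (Nat.factorial (k - 1 + i) : ℚ) /
            ((Nat.factorial (k - 1 - i) : ℚ) * (Nat.factorial i : ℚ)) ≠ 0 := by
  obtain ⟨m, rfl⟩ : ∃ m, k = m + 1 := ⟨k - 1, (Nat.succ_pred_eq_of_pos hk).symm⟩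
  have key : (∑ i ∈ Finset.range (m + 1),
        (-(1 : ℚ) / 2) ^ i * (Nat.descFactorial (2 * (m + 1) - 1) (m + 1 - i) : ℚ) *
          (Nat.factorial (m + 1 - 1 + i) : ℚ) /
            ((Nat.factorial (m + 1 - 1 - i) : ℚ) * (Nat.factorial i : ℚ)))
      = (Nat.factorial (2 * (m + 1) - 1) : ℚ) /
          (2 ^ (m + 1 - 1) * (Nat.factorial (m + 1 - 1) : ℚ)) := by
    simp only [Nat.add_sub_cancel]
    have h1 : ∀ i ∈ Finset.range (m + 1),
        (-(1 : ℚ) / 2) ^ i * (Nat.descFactorial (2 * (m + 1) - 1) (m + 1 - i) : ℚ) *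
          (Nat.factorial (m + i) : ℚ) / ((Nat.factorial (m - i) : ℚ) * (Nat.factorial i : ℚ))
        = (Nat.factorial (2 * m + 1) : ℚ) / (Nat.factorial m) *
            ((m.choose i : ℚ) * (-(1 : ℚ) / 2) ^ i) := by
      intro i hi
      have him : i ≤ m := Nat.lt_succ_iff.mp (Finset.mem_range.mp hi)
      have h2k : 2 * (m + 1) - 1 = 2 * m + 1 := by omega
      have hd : (Nat.factorial (m + i)) * Nat.descFactorial (2 * m + 1) (m + 1 - i)
          = Nat.factorial (2 * m + 1) := by
        have hle : m + 1 - i ≤ 2 * m + 1 := by omega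
        have := Nat.factorial_mul_descFactorial hle
        rwa [show 2 * m + 1 - (m + 1 - i) = m + i by omega] at this
      have hc : m.choose i * (Nat.factorial i) * (Nat.factorial (m - i))
          = Nat.factorial m := Nat.choose_mul_factorial_mul_factorial him
      have hdq : (Nat.factorial (m + i) : ℚ) * (Nat.descFactorial (2 * m + 1) (m + 1 - i) : ℚ)
          = (Nat.factorial (2 * m + 1) : ℚ) := by exact_mod_cast congrArg Nat.cast hd
      have hcq : (m.choose i : ℚ) * (Nat.factorial i : ℚ) * (Nat.factorial (m - i) : ℚ)
          = (Nat.factorial m : ℚ) := by exact_mod_cast congrArg Nat.cast hc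
      rw [h2k]
      have f1 : (Nat.factorial (m - i) : ℚ) ≠ 0 := by positivity
      have f2 : (Nat.factorial i : ℚ) ≠ 0 := by positivity
      have f3 : (Nat.factorial m : ℚ) ≠ 0 := by positivity
      field_simp
      linear_combination (Nat.factorial m : ℚ) * hdq - (Nat.factorial (2*m+1) : ℚ) * hcq
    rw [Finset.sum_congr rfl h1, ← Finset.mul_sum]
    have hb : ∑ i ∈ Finset.range (m + 1), ((m.choose i : ℚ) * (-(1 : ℚ) / 2) ^ i)
        = ((1 : ℚ) / 2) ^ m := by
      have := add_pow (-(1 : ℚ) / 2) 1 m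
      simp only [one_pow, mul_one] at this
      rw [show ((1:ℚ)/2) = (-(1:ℚ)/2 + 1) by norm_num, this]
      exact Finset.sum_congr rfl fun i _ => by ring
    rw [hb, show 2 * (m + 1) - 1 = 2 * m + 1 by omega]
    rw [div_pow, one_pow, div_mul_div_comm, mul_one,
      mul_comm (Nat.factorial m : ℚ) ((2:ℚ) ^ m)]
  refine ⟨key, key ▸ ?_⟩
  have h1 : (Nat.factorial (2 * (m + 1) - 1) : ℚ) ≠ 0 := by positivity
  have h2 : (2 : ℚ) ^ (m + 1 - 1) * (Nat.factorial (m + 1 - 1) : ℚ) ≠ 0 := by positivity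
  exact div_ne_zero h1 h2
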